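/- For every compact set A ⊆ 2^ω, the Hausdorff dimension of A satisfies dim_H(A) = sup{ s > 0 : there exist a constant c > 0 and a mass distribution μ on A such that μ(N_σ) ≤ c·2^{-s·|σ|} for all finite binary strings σ }, where the supremum of the empty set is taken to be 0. -/

import Mathlib

open MeasureTheory ENNReal

noncomputable local instance : MetricSpace (ℕ → Bool) := PiNat.metricSpace

/-- The basic open cylinder `N_σ` of a finite binary string `σ` in Cantor space `2^ω`. -/
def cyl (σ : List Bool) : Set (ℕ → Bool) :=
  {x | ∀ i : Fin σ.length, x i = σ.get i}

/-- A mass distribution on `A` is a Borel probability measure vanishing outside `A`. -/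
def IsMassDistributionOn (μ : Measure (ℕ → Bool)) (A : Set (ℕ → Bool)) : Prop :=
  IsProbabilityMeasure μ ∧ μ Aᶜ = 0

namespace Stmt16Aux

attribute [local instance] Classical.propDecidable

open Set List

lemma mem_cyl_iff {σ : List Bool} {x : ℕ → Bool} :
    x ∈ cyl σ ↔ ∀ i, (hi : i < σ.length) → x i = σ[i] := by
  constructor
  · intro h i hi; exact h ⟨i, hi⟩
  · intro h i; exact h i.1 i.2

lemma cyl_nil : cyl ([] : List Bool) = Set.univ := by
  ext x; simp [cyl]

lemma cyl_mono {σ τ : List Bool} (h : σ <+: τ) : cyl τ ⊆ cyl σ := by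
  intro x hx
  rw [mem_cyl_iff] at hx ⊢
  intro i hi
  rw [h.getElem hi]
  exact hx i (lt_of_lt_of_le hi h.length_le)

/-- canonical extension of a finite string -/
def ext0 (σ : List Bool) : ℕ → Bool := fun i => σ.getD i false

lemma ext0_mem (σ : List Bool) : ext0 σ ∈ cyl σ := by
  rw [mem_cyl_iff]
  intro i hi
  simp [ext0, List.getD_eq_getElem _ _ hi, List.getElem?_eq_getElem hi]

lemma cyl_nonempty (σ : List Bool) : (cyl σ).Nonempty := ⟨ext0 σ, ext0_mem σ⟩

lemma mem_cyl_append {σ : List Bool} {b : Bool} {x : ℕ → Bool} :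
    x ∈ cyl (σ ++ [b]) ↔ x ∈ cyl σ ∧ x σ.length = b := by
  simp only [mem_cyl_iff, List.length_append, List.length_cons, List.length_nil]
  constructor
  · intro h
    refine ⟨fun i hi => ?_, ?_⟩
    · rw [← List.getElem_append_left (bs := [b]) hi]
      exact h i (by omega)
    · have := h σ.length (by omega)
      rwa [List.getElem_append_right (le_refl σ.length), List.getElem_singleton] at this
  · rintro ⟨h1, h2⟩ i hi
    rcases lt_or_ge i σ.length with hlt | hge
    · rw [List.getElem_append_left hlt]; exact h1 i hlt
    · have : i = σ.length := by omega
      subst this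
      rw [List.getElem_append_right (le_refl σ.length)]
      · simpa using h2

lemma self_mem_cyl_ofFn (x : ℕ → Bool) (n : ℕ) :
    x ∈ cyl (List.ofFn fun i : Fin n => x i) := by
  rw [mem_cyl_iff]
  intro i hi
  have hi' : i < n := by simpa using hi
  simp

lemma cyl_eq_union (σ : List Bool) :
    cyl σ = cyl (σ ++ [false]) ∪ cyl (σ ++ [true]) := by
  ext x
  constructor
  · intro hx
    cases hb : x σ.length
    · left; exact mem_cyl_append.2 ⟨hx, hb⟩
    · right; exact mem_cyl_append.2 ⟨hx, hb⟩
  · rintro (hx | hx) <;> exact cyl_mono (σ.prefix_append _) hx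

lemma prefix_of_le_of_mem {σ τ : List Bool} {x : ℕ → Bool} (hlen : σ.length ≤ τ.length)
    (hσ : x ∈ cyl σ) (hτ : x ∈ cyl τ) : σ <+: τ := by
  rw [List.prefix_iff_eq_take]
  apply List.ext_getElem
  · simp [Nat.min_eq_left hlen]
  · intro i h1 h2
    rw [mem_cyl_iff] at hσ hτ
    have h3 : i < τ.length := by omega
    rw [List.getElem_take]
    rw [← hσ i h1, ← hτ i h3]

lemma compat_of_mem {σ τ : List Bool} {x : ℕ → Bool} (hσ : x ∈ cyl σ) (hτ : x ∈ cyl τ) :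
    σ <+: τ ∨ τ <+: σ := by
  rcases le_total σ.length τ.length with h | h
  · exact Or.inl (prefix_of_le_of_mem h hσ hτ)
  · exact Or.inr (prefix_of_le_of_mem h hτ hσ)

lemma isClosed_cyl (σ : List Bool) : IsClosed (cyl σ) := by
  have : cyl σ = ⋂ i : Fin σ.length, (fun x : ℕ → Bool => x i) ⁻¹' {σ.get i} := by
    ext x; simp [cyl, Set.mem_iInter]
  rw [this]
  exact isClosed_iInter fun i =>
    IsClosed.preimage (continuous_apply (i : ℕ)) (isClosed_discrete {σ.get i})

lemma isOpen_cyl (σ : List Bool) : IsOpen (cyl σ) := by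
  have : cyl σ = ⋂ i : Fin σ.length, (fun x : ℕ → Bool => x i) ⁻¹' {σ.get i} := by
    ext x; simp [cyl, Set.mem_iInter]
  rw [this]
  exact isOpen_iInter_of_finite fun i =>
    IsOpen.preimage (continuous_apply (i : ℕ)) (isOpen_discrete {σ.get i})

lemma isCompact_cyl (σ : List Bool) : IsCompact (cyl σ) :=
  (isClosed_cyl σ).isCompact

lemma measurableSet_cyl (σ : List Bool) : MeasurableSet (cyl σ) :=
  (isClosed_cyl σ).measurableSet

lemma dist_le_of_mem_cyl {σ : List Bool} {x y : ℕ → Bool} (hx : x ∈ cyl σ) (hy : y ∈ cyl σ) :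
    dist x y ≤ (1/2 : ℝ) ^ σ.length := by
  rcases eq_or_ne x y with rfl | hne
  · rw [dist_self]; positivity
  · rw [PiNat.dist_eq_of_ne hne]
    apply pow_le_pow_of_le_one (by norm_num) (by norm_num)
    by_contra hlt
    push_neg at hlt
    have := PiNat.apply_firstDiff_ne hne
    rw [mem_cyl_iff] at hx hy
    exact this ((hx _ hlt).trans (hy _ hlt).symm)

lemma edist_le_of_mem_cyl {σ : List Bool} {x y : ℕ → Bool} (hx : x ∈ cyl σ) (hy : y ∈ cyl σ) :
    edist x y ≤ (2⁻¹ : ℝ≥0∞) ^ σ.length := by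
  rw [edist_dist]
  calc ENNReal.ofReal (dist x y) ≤ ENNReal.ofReal ((1/2:ℝ)^σ.length) :=
        ENNReal.ofReal_le_ofReal (dist_le_of_mem_cyl hx hy)
    _ = (2⁻¹ : ℝ≥0∞) ^ σ.length := by
        rw [ENNReal.ofReal_pow (by norm_num)]
        congr 1
        rw [show (1/2:ℝ) = 2⁻¹ by norm_num, ENNReal.ofReal_inv_of_pos (by norm_num)]
        norm_num

lemma diam_cyl_le (σ : List Bool) : EMetric.diam (cyl σ) ≤ (2⁻¹ : ℝ≥0∞) ^ σ.length :=
  EMetric.diam_le fun _ hx _ hy => edist_le_of_mem_cyl hx hy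

lemma subset_cyl_of_diam_le {E : Set (ℕ → Bool)} {x : ℕ → Bool} (hx : x ∈ E) {n : ℕ}
    (hd : EMetric.diam E ≤ (2⁻¹ : ℝ≥0∞) ^ n) : E ⊆ cyl (List.ofFn fun i : Fin n => x i) := by
  intro y hy
  rw [mem_cyl_iff]
  intro i hi
  have hi' : i < n := by simpa using hi
  rcases eq_or_ne x y with rfl | hne
  · simp
  · have h1 : edist x y ≤ (2⁻¹ : ℝ≥0∞) ^ n := le_trans (EMetric.edist_le_diam_of_mem hx hy) hd
    have h2 : dist x y ≤ (1/2:ℝ)^n := by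
      rw [edist_dist] at h1
      have : ((2⁻¹ : ℝ≥0∞) ^ n) = ENNReal.ofReal ((1/2:ℝ)^n) := by
        rw [ENNReal.ofReal_pow (by norm_num)]
        congr 1
        rw [show (1/2:ℝ) = 2⁻¹ by norm_num, ENNReal.ofReal_inv_of_pos (by norm_num)]
        norm_num
      rw [this, ENNReal.ofReal_le_ofReal_iff (by positivity)] at h1
      exact h1
    have h3 : n ≤ PiNat.firstDiff x y := by
      by_contra hlt
      push_neg at hlt
      rw [PiNat.dist_eq_of_ne hne] at h2
      have := pow_lt_pow_right_of_lt_one₀ (a := (1/2:ℝ)) (by norm_num) (by norm_num) hlt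
      linarith
    have := PiNat.apply_eq_of_lt_firstDiff (x := y) (y := x) (n := i) (by rw [PiNat.firstDiff_comm]; omega)
    simp [this]


/-! ### weights -/

noncomputable def ew (s : ℝ) (σ : List Bool) : ℝ≥0∞ := (2 : ℝ≥0∞) ^ (-s * (σ.length : ℝ))

lemma ew_pos (s : ℝ) (σ : List Bool) : 0 < ew s σ :=
  ENNReal.rpow_pos (by norm_num) (by norm_num)

lemma ew_le_one {s : ℝ} (hs : 0 ≤ s) (σ : List Bool) : ew s σ ≤ 1 := by
  have h : ew s σ ≤ (2:ℝ≥0∞) ^ (0:ℝ) := by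
    apply ENNReal.rpow_le_rpow_of_exponent_le (by norm_num)
    have : 0 ≤ s * σ.length := by positivity
    linarith
  simpa using h

lemma ew_ne_top {s : ℝ} (hs : 0 ≤ s) (σ : List Bool) : ew s σ ≠ ∞ :=
  fun h => by simpa [h] using ew_le_one hs σ

lemma ew_nil (s : ℝ) : ew s [] = 1 := by simp [ew]

lemma ew_replicate (s : ℝ) (n : ℕ) :
    ew s (List.replicate n false) = ((2:ℝ≥0∞) ^ (-s)) ^ n := by
  rw [ew, List.length_replicate, ENNReal.rpow_mul, ENNReal.rpow_natCast]

lemma exists_ew_lt {s : ℝ} (hs : 0 < s) {ε : ℝ≥0∞} (hε : 0 < ε) :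
    ∃ σ : List Bool, ew s σ < ε := by
  by_cases hε' : ε = ∞
  · exact ⟨[], by rw [ew_nil, hε']; exact ENNReal.one_lt_top⟩
  have hq : (2:ℝ≥0∞) ^ (-s) < 1 :=
    ENNReal.rpow_lt_one_of_one_lt_of_neg (by norm_num) (by linarith)
  have h2 := ENNReal.tendsto_pow_atTop_nhds_zero_of_lt_one hq
  rw [ENNReal.tendsto_atTop_zero] at h2
  obtain ⟨N, hN⟩ := h2 (ε/2) (ENNReal.div_pos hε.ne' (by norm_num))
  refine ⟨List.replicate N false, ?_⟩
  rw [ew_replicate]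
  calc ((2:ℝ≥0∞)^(-s))^N ≤ ε/2 := hN N le_rfl
    _ < ε := ENNReal.half_lt_self hε.ne' hε'

lemma ew_pow_diam (s : ℝ) (n : ℕ) :
    ((2⁻¹ : ℝ≥0∞) ^ n) ^ s = (2:ℝ≥0∞) ^ (-s * (n:ℝ)) := by
  rw [← ENNReal.rpow_natCast (2⁻¹ : ℝ≥0∞) n, ← ENNReal.rpow_neg_one (2:ℝ≥0∞),
    ← ENNReal.rpow_mul, ← ENNReal.rpow_mul]
  ring_nf

/-! ### the min-cut recursion -/

variable (A : Set (ℕ → Bool)) (s : ℝ)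

def hits (σ : List Bool) : Prop := (A ∩ cyl σ).Nonempty

noncomputable def cut : ℕ → List Bool → ℝ≥0∞
  | 0, σ => if hits A σ then ew s σ else 0
  | (m+1), σ => if hits A σ then
      min (ew s σ) (cut m (σ ++ [false]) + cut m (σ ++ [true])) else 0

variable {A s}

lemma cut_le_ew (m : ℕ) (σ : List Bool) : cut A s m σ ≤ ew s σ := by
  cases m <;> (simp only [cut]; split)
  · exact le_rfl
  · exact zero_le
  · exact min_le_left _ _
  · exact zero_le

lemma hits_mono {σ τ : List Bool} (h : σ <+: τ) (hτ : hits A τ) : hits A σ := by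
  obtain ⟨x, hx1, hx2⟩ := hτ
  exact ⟨x, hx1, cyl_mono h hx2⟩

lemma cut_succ_le (m : ℕ) (σ : List Bool) : cut A s (m+1) σ ≤ cut A s m σ := by
  induction m generalizing σ with
  | zero =>
    simp only [cut]; split
    · exact min_le_left _ _
    · exact le_rfl
  | succ m ih =>
    simp only [cut]; split
    · exact min_le_min le_rfl (add_le_add (ih _) (ih _))
    · exact le_rfl

lemma cut_anti {m m' : ℕ} (h : m ≤ m') (σ : List Bool) : cut A s m' σ ≤ cut A s m σ := by
  induction h with
  | refl => exact le_rfl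
  | step h ih => exact le_trans (cut_succ_le _ _) ih

noncomputable def gflow (A : Set (ℕ → Bool)) (s : ℝ) (σ : List Bool) : ℝ≥0∞ :=
  ⨅ m, cut A s m σ

lemma gflow_le_ew (σ : List Bool) : gflow A s σ ≤ ew s σ :=
  le_trans (iInf_le _ 0) (cut_le_ew _ _)

lemma gflow_ne_top {s : ℝ} (hs : 0 ≤ s) (σ : List Bool) : gflow A s σ ≠ ∞ :=
  fun h => ew_ne_top hs σ (top_le_iff.1 (h ▸ gflow_le_ew σ))

lemma gflow_of_not_hits {σ : List Bool} (h : ¬ hits A σ) : gflow A s σ = 0 :=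
  le_antisymm (le_trans (iInf_le _ 0) (by simp [cut, h])) (zero_le)

lemma gflow_eq_min {σ : List Bool} (h : hits A σ) :
    gflow A s σ = min (ew s σ)
      (gflow A s (σ ++ [false]) + gflow A s (σ ++ [true])) := by
  have h2 : ∀ m, cut A s (m+1) σ
      = min (ew s σ) (cut A s m (σ ++ [false]) + cut A s m (σ ++ [true])) := by
    intro m; simp only [cut, if_pos h]
  apply _root_.le_antisymm
  · apply le_min
    · exact gflow_le_ew σ
    · have e := ENNReal.iInf_add_iInf (f := fun m => cut A s m (σ ++ [false]))
        (g := fun m => cut A s m (σ ++ [true])) (fun i j =>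
        ⟨max i j, add_le_add (cut_anti (le_max_left i j) _) (cut_anti (le_max_right i j) _)⟩)
      simp only [gflow]; rw [e]
      exact le_iInf fun m => le_trans (iInf_le _ (m+1)) (le_trans (le_of_eq (h2 m))
        (min_le_right _ _))
  · apply le_iInf fun m => ?_
    cases m with
    | zero => exact le_trans (min_le_left _ _) (le_of_eq (by simp [cut, if_pos h]))
    | succ m =>
      rw [h2 m]
      exact min_le_min le_rfl (add_le_add (iInf_le _ m) (iInf_le _ m))


/-! ### the proportional flow -/

noncomputable def ratio (A : Set (ℕ → Bool)) (s : ℝ) (σ : List Bool) (b : Bool) : ℝ≥0∞ :=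
  gflow A s (σ ++ [b]) / (gflow A s (σ ++ [false]) + gflow A s (σ ++ [true]))

noncomputable def kflow (A : Set (ℕ → Bool)) (s : ℝ) : List Bool → ℝ≥0∞
  | [] => gflow A s []
  | b :: τ => kflow A s τ * ratio A s τ.reverse b

noncomputable def hflow (A : Set (ℕ → Bool)) (s : ℝ) (σ : List Bool) : ℝ≥0∞ :=
  kflow A s σ.reverse

lemma hflow_nil : hflow A s [] = gflow A s [] := rfl

lemma hflow_append (σ : List Bool) (b : Bool) :
    hflow A s (σ ++ [b]) = hflow A s σ * ratio A s σ b := by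
  show kflow A s (σ ++ [b]).reverse = _
  rw [show (σ ++ [b]).reverse = b :: σ.reverse by simp]
  show kflow A s σ.reverse * ratio A s σ.reverse.reverse b = _
  rw [List.reverse_reverse]
  rfl

lemma gflow_snoc_le_denom (σ : List Bool) (b : Bool) :
    gflow A s (σ ++ [b]) ≤ gflow A s (σ ++ [false]) + gflow A s (σ ++ [true]) := by
  cases b
  · exact le_add_right le_rfl
  · exact le_add_left le_rfl

lemma gflow_of_denom_zero {σ : List Bool}
    (hD : gflow A s (σ ++ [false]) + gflow A s (σ ++ [true]) = 0) : gflow A s σ = 0 := by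
  by_cases h : hits A σ
  · rw [gflow_eq_min h, hD]; simp
  · exact gflow_of_not_hits h

lemma hflow_le_gflow {s : ℝ} (hs : 0 ≤ s) (σ : List Bool) : hflow A s σ ≤ gflow A s σ := by
  suffices H : ∀ τ : List Bool, kflow A s τ ≤ gflow A s τ.reverse by
    have := H σ.reverse
    rwa [List.reverse_reverse] at this
  intro τ
  induction τ with
  | nil => exact le_rfl
  | cons b τ ih =>
    show kflow A s τ * ratio A s τ.reverse b ≤ gflow A s (b :: τ).reverse
    rw [List.reverse_cons]
    set σ' := τ.reverse with hσ'
    set D := gflow A s (σ' ++ [false]) + gflow A s (σ' ++ [true]) with hD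
    by_cases hD0 : D = 0
    · have hnum : gflow A s (σ' ++ [b]) = 0 :=
        le_antisymm (le_trans (gflow_snoc_le_denom σ' b) (le_of_eq hD0)) (zero_le)
      rw [ratio, hnum, ENNReal.zero_div, mul_zero]
    · have hhits : hits A σ' := by
        by_contra hn
        apply hD0
        rw [hD, gflow_of_not_hits (fun hh => hn (hits_mono (σ'.prefix_append [false]) hh)),
          gflow_of_not_hits (fun hh => hn (hits_mono (σ'.prefix_append [true]) hh)), add_zero]
      have h1 : gflow A s σ' ≤ D := by
        rw [gflow_eq_min hhits]; exact min_le_right _ _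
      calc kflow A s τ * ratio A s σ' b ≤ gflow A s σ' * ratio A s σ' b :=
            mul_le_mul' ih le_rfl
        _ ≤ D * (gflow A s (σ' ++ [b]) / D) := mul_le_mul' h1 le_rfl
        _ ≤ gflow A s (σ' ++ [b]) := ENNReal.mul_div_le

lemma hflow_le_ew {s : ℝ} (hs : 0 ≤ s) (σ : List Bool) : hflow A s σ ≤ ew s σ :=
  le_trans (hflow_le_gflow hs σ) (gflow_le_ew σ)

lemma hflow_ne_top {s : ℝ} (hs : 0 ≤ s) (σ : List Bool) : hflow A s σ ≠ ∞ :=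
  fun h => ew_ne_top hs σ (top_le_iff.1 (h ▸ hflow_le_ew hs σ))

lemma hflow_of_not_hits {s : ℝ} (hs : 0 ≤ s) {σ : List Bool} (h : ¬ hits A σ) :
    hflow A s σ = 0 :=
  le_antisymm (le_trans (hflow_le_gflow hs σ) (le_of_eq (gflow_of_not_hits h))) (zero_le)

lemma hflow_add {s : ℝ} (hs : 0 ≤ s) (σ : List Bool) :
    hflow A s σ = hflow A s (σ ++ [false]) + hflow A s (σ ++ [true]) := by
  rw [hflow_append, hflow_append, ratio, ratio]
  set D := gflow A s (σ ++ [false]) + gflow A s (σ ++ [true]) with hD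
  by_cases hD0 : D = 0
  · have h0 : gflow A s (σ ++ [false]) = 0 :=
      le_antisymm (le_trans (gflow_snoc_le_denom σ false) (le_of_eq hD0)) (zero_le)
    have h1 : gflow A s (σ ++ [true]) = 0 :=
      le_antisymm (le_trans (gflow_snoc_le_denom σ true) (le_of_eq hD0)) (zero_le)
    have hg : hflow A s σ = 0 :=
      le_antisymm (le_trans (hflow_le_gflow hs σ)
        (le_of_eq (gflow_of_denom_zero hD0))) (zero_le)
    rw [hg, h0, h1, ENNReal.zero_div]
    simp
  · have hDtop : D ≠ ∞ := by
      rw [hD]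
      exact ENNReal.add_ne_top.2 ⟨gflow_ne_top hs _, gflow_ne_top hs _⟩
    rw [← mul_add, ENNReal.div_add_div_same, ← hD, ENNReal.div_self hD0 hDtop, mul_one]

lemma hflow_snoc_le {s : ℝ} (hs : 0 ≤ s) (σ : List Bool) (b : Bool) :
    hflow A s (σ ++ [b]) ≤ hflow A s σ := by
  rw [hflow_add hs σ]
  cases b
  · exact le_add_right le_rfl
  · exact le_add_left le_rfl

lemma hflow_prefix {s : ℝ} (hs : 0 ≤ s) {σ τ : List Bool} (h : σ <+: τ) :
    hflow A s τ ≤ hflow A s σ := by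
  induction τ using List.reverseRecOn with
  | nil => rw [List.prefix_nil.1 h]
  | append_singleton τ b ih =>
    rcases List.prefix_concat_iff.1 h with rfl | h'
    · exact le_rfl
    · exact le_trans (hflow_snoc_le hs τ b) (ih h')

lemma hflow_level {s : ℝ} (hs : 0 ≤ s) (N : ℕ) (σ : List Bool) :
    ∑ v : Fin N → Bool, hflow A s (σ ++ List.ofFn v) = hflow A s σ := by
  induction N generalizing σ with
  | zero =>
    rw [Fintype.sum_unique]
    simp
  | succ N ih =>
    have e : ∀ v : Fin (N+1) → Bool,
        σ ++ List.ofFn v = (σ ++ [v 0]) ++ List.ofFn (fun i : Fin N => v i.succ) := by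
      intro v
      rw [List.ofFn_succ, List.append_cons, List.append_assoc]
    simp_rw [e]
    rw [← Equiv.sum_comp (Fin.consEquiv (fun _ : Fin (N+1) => Bool))
      (fun v => hflow A s ((σ ++ [v 0]) ++ List.ofFn (fun i : Fin N => v i.succ)))]
    rw [Fintype.sum_prod_type]
    have : ∀ (b : Bool) (w : Fin N → Bool),
        (Fin.consEquiv (fun _ : Fin (N+1) => Bool)) (b, w) 0 = b := fun _ _ => rfl
    simp_rw [this]
    have e2 : ∀ (b : Bool) (w : Fin N → Bool), (fun i : Fin N =>
        (Fin.consEquiv (fun _ : Fin (N+1) => Bool)) (b, w) i.succ) = w := by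
      intro b w; funext i; rfl
    simp_rw [e2]
    have e3 : ∀ b : Bool, ∑ w : Fin N → Bool, hflow A s ((σ ++ [b]) ++ List.ofFn w)
        = hflow A s (σ ++ [b]) := fun b => ih (σ ++ [b])
    rw [Fintype.sum_bool, e3 true, e3 false, hflow_add hs σ]
    exact add_comm _ _

lemma cyl_eq_iUnion_level (σ : List Bool) (N : ℕ) :
    cyl σ = ⋃ v : Fin N → Bool, cyl (σ ++ List.ofFn v) := by
  apply Set.Subset.antisymm
  · intro x hx
    refine Set.mem_iUnion.2 ⟨fun i => x (σ.length + i), ?_⟩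
    rw [mem_cyl_iff]
    intro i hi
    have hlen : i < σ.length + N := by simpa using hi
    rcases lt_or_ge i σ.length with h1 | h1
    · rw [List.getElem_append_left h1]
      exact (mem_cyl_iff.1 hx) i h1
    · rw [List.getElem_append_right h1]
      rw [List.getElem_ofFn]
      simp only [Fin.cast_mk]
      congr 1
      omega
  · exact Set.iUnion_subset fun v => cyl_mono (σ.prefix_append _)

/-! ### the finite cover lemma -/

lemma fc {s : ℝ} (hs : 0 ≤ s) :
    ∀ (k : ℕ) (σ : List Bool) (F : Finset ℕ) (τ : ℕ → List Bool),
    (∀ n ∈ F, (cyl (τ n) ∩ cyl σ).Nonempty → (τ n).length ≤ σ.length + k) →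
    (cyl σ ⊆ ⋃ n ∈ F, cyl (τ n)) → hflow A s σ ≤ ∑ n ∈ F, hflow A s (τ n) := by
  have easy : ∀ (σ : List Bool) (F : Finset ℕ) (τ : ℕ → List Bool),
      (∃ n ∈ F, τ n <+: σ) → hflow A s σ ≤ ∑ n ∈ F, hflow A s (τ n) := by
    rintro σ F τ ⟨n, hnF, hpre⟩
    exact le_trans (hflow_prefix hs hpre)
      (Finset.single_le_sum (f := fun n => hflow A s (τ n)) (fun i _ => zero_le) hnF)
  intro k
  induction k with
  | zero =>
    intro σ F τ hlen hcov
    obtain ⟨n, hnF, hxn⟩ := Set.mem_iUnion₂.1 (hcov (ext0_mem σ))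
    apply easy σ F τ ⟨n, hnF, ?_⟩
    have hrel : (cyl (τ n) ∩ cyl σ).Nonempty := ⟨ext0 σ, hxn, ext0_mem σ⟩
    have hl := hlen n hnF hrel
    rcases compat_of_mem (ext0_mem σ) hxn with h | h
    · exact h.eq_of_length_le (by omega) ▸ List.prefix_refl _
    · exact h
  | succ k ih =>
    intro σ F τ hlen hcov
    by_cases hE : ∃ n ∈ F, τ n <+: σ
    · exact easy σ F τ hE
    push_neg at hE
    have hsplit : ∀ b : Bool, cyl (σ ++ [b]) ⊆
        ⋃ n ∈ F.filter (fun n => (σ ++ [b]) <+: τ n), cyl (τ n) := by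
      intro b x hxb
      have hxσ : x ∈ cyl σ := cyl_mono (σ.prefix_append [b]) hxb
      obtain ⟨n, hnF, hxn⟩ := Set.mem_iUnion₂.1 (hcov hxσ)
      have hστ : σ <+: τ n := by
        rcases compat_of_mem hxσ hxn with h | h
        · exact h
        · exact absurd h (hE n hnF)
      have hlt : σ.length < (τ n).length := by
        rcases lt_or_ge σ.length (τ n).length with h | h
        · exact h
        · exact absurd (hστ.eq_of_length_le h ▸ List.prefix_refl σ) (hE n hnF)
      have hpre : (σ ++ [(τ n)[σ.length]]) <+: τ n := by
        rw [List.prefix_iff_eq_take]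
        apply List.ext_getElem
        · simp [Nat.min_eq_left hlt]
        · intro i h1 h2
          have h3 : i < σ.length + 1 := by simpa using h1
          rw [List.getElem_take]
          rcases lt_or_ge i σ.length with h4 | h4
          · rw [List.getElem_append_left h4]
            exact hστ.getElem h4
          · have : i = σ.length := by omega
            subst this
            rw [List.getElem_append_right (le_refl _)]
            simp
      have hval : (τ n)[σ.length] = b := by
        have h5 : x σ.length = (τ n)[σ.length] := (mem_cyl_iff.1 hxn) σ.length hlt
        have h6 : x σ.length = b := (mem_cyl_append.1 hxb).2
        rw [← h5, h6]
      rw [hval] at hpre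
      exact Set.mem_iUnion₂.2 ⟨n, Finset.mem_filter.2 ⟨hnF, hpre⟩, hxn⟩
    have hlen' : ∀ b : Bool, ∀ n ∈ F.filter (fun n => (σ ++ [b]) <+: τ n),
        (cyl (τ n) ∩ cyl (σ ++ [b])).Nonempty → (τ n).length ≤ (σ ++ [b]).length + k := by
      intro b n hn hrel
      have hnF : n ∈ F := (Finset.mem_filter.1 hn).1
      have hrel' : (cyl (τ n) ∩ cyl σ).Nonempty :=
        hrel.mono (Set.inter_subset_inter_right _ (cyl_mono (σ.prefix_append [b])))
      have := hlen n hnF hrel'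
      simp only [List.length_append, List.length_cons, List.length_nil]
      omega
    have h0 := ih (σ ++ [false]) (F.filter (fun n => (σ ++ [false]) <+: τ n)) τ
      (hlen' false) (hsplit false)
    have h1 := ih (σ ++ [true]) (F.filter (fun n => (σ ++ [true]) <+: τ n)) τ
      (hlen' true) (hsplit true)
    have hdisj : Disjoint (F.filter (fun n => (σ ++ [false]) <+: τ n))
        (F.filter (fun n => (σ ++ [true]) <+: τ n)) := by
      rw [Finset.disjoint_left]
      intro n hn0 hn1
      have p0 := (Finset.mem_filter.1 hn0).2
      have p1 := (Finset.mem_filter.1 hn1).2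
      have hl0 : σ.length < (σ ++ [false]).length := by simp
      have e0 := p0.getElem hl0
      have e1 := p1.getElem (by simp : σ.length < (σ ++ [true]).length)
      rw [List.getElem_append_right (le_refl _)] at e0 e1
      simp only [List.getElem_singleton] at e0 e1
      rw [← e1] at e0
      simp at e0
    calc hflow A s σ = hflow A s (σ ++ [false]) + hflow A s (σ ++ [true]) := hflow_add hs σ
      _ ≤ (∑ n ∈ F.filter (fun n => (σ ++ [false]) <+: τ n), hflow A s (τ n))
          + ∑ n ∈ F.filter (fun n => (σ ++ [true]) <+: τ n), hflow A s (τ n) :=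
            add_le_add h0 h1
      _ = ∑ n ∈ (F.filter (fun n => (σ ++ [false]) <+: τ n))
          ∪ (F.filter (fun n => (σ ++ [true]) <+: τ n)), hflow A s (τ n) :=
            (Finset.sum_union hdisj).symm
      _ ≤ ∑ n ∈ F, hflow A s (τ n) :=
            Finset.sum_le_sum_of_subset
              (Finset.union_subset (Finset.filter_subset _ _) (Finset.filter_subset _ _))


/-! ### covering functionals -/

noncomputable def mfun (w : List Bool → ℝ≥0∞) (E : Set (ℕ → Bool)) : ℝ≥0∞ :=
  ⨅ (σ : List Bool) (_ : E ⊆ cyl σ), w σ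

lemma mfun_le {w : List Bool → ℝ≥0∞} {E : Set (ℕ → Bool)} {σ : List Bool} (h : E ⊆ cyl σ) :
    mfun w E ≤ w σ := iInf₂_le σ h

lemma mfun_le_nil (w : List Bool → ℝ≥0∞) (E : Set (ℕ → Bool)) : mfun w E ≤ w [] :=
  mfun_le (by rw [cyl_nil]; exact Set.subset_univ E)

lemma mfun_empty {s : ℝ} (hs : 0 < s) {w : List Bool → ℝ≥0∞} (hw : ∀ σ, w σ ≤ ew s σ) :
    mfun w ∅ = 0 := by
  apply _root_.le_antisymm _ (zero_le)
  refine ENNReal.le_of_forall_pos_le_add fun ε hε _ => ?_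
  obtain ⟨σ, hσ⟩ := exists_ew_lt hs (ε := (ε : ℝ≥0∞)) (ENNReal.coe_pos.2 hε)
  calc mfun w ∅ ≤ w σ := mfun_le (Set.empty_subset _)
    _ ≤ ew s σ := hw σ
    _ ≤ 0 + ε := by rw [zero_add]; exact hσ.le

lemma mfun_exists {w : List Bool → ℝ≥0∞} (hfin : w [] ≠ ∞) (E : Set (ℕ → Bool)) {δ : ℝ≥0∞}
    (hδ : 0 < δ) : ∃ τ, E ⊆ cyl τ ∧ w τ ≤ mfun w E + δ := by
  have hfin' : mfun w E ≠ ∞ := fun h => hfin (top_le_iff.1 (h ▸ mfun_le_nil w E))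
  have hlt : mfun w E < mfun w E + δ := ENNReal.lt_add_right hfin' hδ.ne'
  conv_lhs at hlt => rw [mfun]
  obtain ⟨σ, hσ⟩ := iInf_lt_iff.1 hlt
  obtain ⟨hE, hw⟩ := iInf_lt_iff.1 hσ
  exact ⟨σ, hE, hw.le⟩

lemma diam_le_one (E : Set (ℕ → Bool)) : EMetric.diam E ≤ 1 := by
  refine EMetric.diam_le fun x _ y _ => ?_
  have hx : x ∈ cyl [] := by rw [cyl_nil]; trivial
  have hy : y ∈ cyl [] := by rw [cyl_nil]; trivial
  simpa using edist_le_of_mem_cyl hx hy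

lemma tsum_half_pow : ∑' n : ℕ, (2⁻¹ : ℝ≥0∞) ^ (n + 1) = 1 := by
  have h1 : ∑' n : ℕ, (2⁻¹ : ℝ≥0∞) ^ n = 2 := by
    rw [ENNReal.tsum_geometric]
    rw [show (1:ℝ≥0∞) - 2⁻¹ = 2⁻¹ by
      rw [ENNReal.sub_eq_of_eq_add (by norm_num)]
      rw [ENNReal.inv_two_add_inv_two]]
    rw [inv_inv]
  calc ∑' n : ℕ, (2⁻¹ : ℝ≥0∞) ^ (n + 1) = ∑' n : ℕ, 2⁻¹ * (2⁻¹ : ℝ≥0∞) ^ n := by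
        congr 1; funext n; rw [pow_succ, mul_comm]
    _ = 2⁻¹ * ∑' n : ℕ, (2⁻¹ : ℝ≥0∞) ^ n := ENNReal.tsum_mul_left
    _ = 1 := by rw [h1, ENNReal.inv_mul_cancel (by norm_num) (by norm_num)]

lemma rpow_le_rpow_cancel {x y : ℝ≥0∞} {s : ℝ} (hs : 0 < s) (h : x ^ s ≤ y ^ s) : x ≤ y := by
  have h2 := ENNReal.rpow_le_rpow h (le_of_lt (by positivity : (0:ℝ) < s⁻¹))
  rwa [← ENNReal.rpow_mul, ← ENNReal.rpow_mul, mul_inv_cancel₀ hs.ne', ENNReal.rpow_one,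
    ENNReal.rpow_one] at h2

/-! ### positivity of the content -/

lemma hausdorff_zero_of_content_zero {A : Set (ℕ → Bool)} {s : ℝ} (hs : 0 < s)
    (h0 : OuterMeasure.ofFunction (mfun (ew s)) (mfun_empty hs (fun _ => le_rfl)) A = 0) :
    μH[s] A = 0 := by
  apply _root_.le_antisymm _ (zero_le)
  rw [Measure.hausdorffMeasure_apply]
  refine iSup₂_le fun r hr => ?_
  refine ENNReal.le_of_forall_pos_le_add fun ε hε _ => ?_
  rw [zero_add]
  set ρ := min r 1 with hρ
  have hρr : ρ ≤ r := min_le_left _ _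
  have hρ1 : ρ ≤ 1 := min_le_right _ _
  have hρ0 : 0 < ρ := lt_min hr zero_lt_one
  have hρtop : ρ ≠ ∞ := fun h => by simp [h] at hρ1
  have hρs : 0 < ρ ^ s := ENNReal.rpow_pos hρ0 hρtop
  set η := min (ε : ℝ≥0∞) (ρ ^ s) with hη
  have hη0 : 0 < η := lt_min (ENNReal.coe_pos.2 hε) hρs
  have hη2 : 0 < η / 2 := ENNReal.div_pos hη0.ne' (by norm_num)
  have h1 : OuterMeasure.ofFunction (mfun (ew s)) (mfun_empty hs (fun _ => le_rfl)) A < η / 2 := by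
    rw [h0]; exact hη2
  rw [OuterMeasure.ofFunction_apply] at h1
  obtain ⟨t, ht⟩ := iInf_lt_iff.1 h1
  obtain ⟨hcov, hsum⟩ := iInf_lt_iff.1 ht
  have hδ : ∀ n : ℕ, (0:ℝ≥0∞) < η / 2 * (2⁻¹) ^ (n + 1) :=
    fun n => ENNReal.mul_pos hη2.ne' (pow_ne_zero _ (by norm_num))
  have hew_nil : ew s [] ≠ ∞ := by rw [ew_nil]; exact one_ne_top
  choose τ hτ1 hτ2 using fun n => mfun_exists hew_nil (t n) (hδ n)
  have hsum2 : ∑' n, ew s (τ n) ≤ η := by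
    calc ∑' n, ew s (τ n) ≤ ∑' n, (mfun (ew s) (t n) + η / 2 * (2⁻¹) ^ (n + 1)) :=
          ENNReal.tsum_le_tsum fun n => hτ2 n
      _ = (∑' n, mfun (ew s) (t n)) + ∑' n, η / 2 * (2⁻¹) ^ (n + 1) := ENNReal.tsum_add
      _ ≤ η / 2 + η / 2 * 1 := by
          apply add_le_add hsum.le
          rw [ENNReal.tsum_mul_left, tsum_half_pow]
      _ = η := by rw [mul_one, ENNReal.add_halves]
  have hterm : ∀ n, ew s (τ n) ≤ η := fun n => le_trans (ENNReal.le_tsum n) hsum2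
  have hdiam : ∀ n, EMetric.diam (cyl (τ n)) ≤ ρ := by
    intro n
    refine le_trans (diam_cyl_le (τ n)) ?_
    apply rpow_le_rpow_cancel hs
    rw [ew_pow_diam s (τ n).length]
    exact le_trans (hterm n) (min_le_right _ _)
  have hAsub : A ⊆ ⋃ n, cyl (τ n) :=
    le_trans hcov (Set.iUnion_mono fun n => hτ1 n)
  refine le_trans (iInf₂_le (fun n => cyl (τ n)) hAsub) ?_
  refine le_trans (iInf_le _ (fun n => le_trans (hdiam n) hρr)) ?_
  calc ∑' n, ⨆ _ : (cyl (τ n)).Nonempty, EMetric.diam (cyl (τ n)) ^ s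
      ≤ ∑' n, ew s (τ n) := by
        refine ENNReal.tsum_le_tsum fun n => iSup_le fun _ => ?_
        calc EMetric.diam (cyl (τ n)) ^ s ≤ ((2⁻¹:ℝ≥0∞) ^ (τ n).length) ^ s :=
              ENNReal.rpow_le_rpow (diam_cyl_le (τ n)) hs.le
          _ = ew s (τ n) := by rw [ew]; exact ew_pow_diam s (τ n).length
    _ ≤ η := hsum2
    _ ≤ ε := min_le_left _ _

lemma content_le_cut {A : Set (ℕ → Bool)} {s : ℝ} (hs : 0 < s) :
    ∀ (m : ℕ) (σ : List Bool),
      OuterMeasure.ofFunction (mfun (ew s)) (mfun_empty hs (fun _ => le_rfl)) (A ∩ cyl σ)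
        ≤ cut A s m σ := by
  intro m
  induction m with
  | zero =>
    intro σ
    by_cases h : hits A σ
    · simp only [cut, if_pos h]
      exact le_trans (OuterMeasure.ofFunction_le _)
        (mfun_le (Set.inter_subset_right))
    · simp only [cut, if_neg h]
      have : A ∩ cyl σ = ∅ := Set.not_nonempty_iff_eq_empty.1 h
      rw [this]
      exact le_of_eq (measure_empty)
  | succ m ih =>
    intro σ
    by_cases h : hits A σ
    · simp only [cut, if_pos h]
      apply le_min
      · exact le_trans (OuterMeasure.ofFunction_le _)
          (mfun_le (Set.inter_subset_right))
      · have hsub : A ∩ cyl σ ⊆ (A ∩ cyl (σ ++ [false])) ∪ (A ∩ cyl (σ ++ [true])) := by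
          rw [← Set.inter_union_distrib_left, ← cyl_eq_union]
        exact le_trans (measure_mono hsub)
          (le_trans (measure_union_le _ _) (add_le_add (ih _) (ih _)))
    · simp only [cut, if_neg h]
      have : A ∩ cyl σ = ∅ := Set.not_nonempty_iff_eq_empty.1 h
      rw [this]
      exact le_of_eq (measure_empty)

lemma gflow_nil_pos {A : Set (ℕ → Bool)} {s : ℝ} (hs : 0 < s)
    (hdim : ENNReal.ofReal s < dimH A) : 0 < gflow A s [] := by
  have hne : μH[s] A ≠ 0 := by
    have hcoe : ((s.toNNReal : ℝ)) = s := Real.coe_toNNReal s hs.le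
    have : μH[(s.toNNReal : ℝ)] A = ∞ := by
      apply hausdorffMeasure_of_lt_dimH
      rw [show ((s.toNNReal : ℝ≥0∞)) = ENNReal.ofReal s from rfl]
      exact hdim
    rw [hcoe] at this
    rw [this]
    exact top_ne_zero
  have hC : OuterMeasure.ofFunction (mfun (ew s)) (mfun_empty hs (fun _ => le_rfl)) A ≠ 0 :=
    fun h => hne (hausdorff_zero_of_content_zero hs h)
  have hle : OuterMeasure.ofFunction (mfun (ew s)) (mfun_empty hs (fun _ => le_rfl)) A
      ≤ gflow A s [] := by
    apply le_iInf fun m => ?_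
    have := content_le_cut (A := A) hs m []
    rwa [cyl_nil, Set.inter_univ] at this
  exact lt_of_le_of_ne (zero_le) (fun h => hC (le_antisymm (hle.trans h.symm.le) (zero_le)))


/-! ### the Frostman measure -/

noncomputable def nuMeas (A : Set (ℕ → Bool)) (s : ℝ) : Measure (ℕ → Bool) :=
  Measure.mkMetric' (mfun (hflow A s))

lemma outer_cyl_le {A : Set (ℕ → Bool)} {s : ℝ} (hs : 0 < s) (σ : List Bool) :
    OuterMeasure.mkMetric' (mfun (hflow A s)) (cyl σ) ≤ hflow A s σ := by
  rw [OuterMeasure.mkMetric'.eq_iSup_nat, OuterMeasure.iSup_apply]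
  refine iSup_le fun n => ?_
  have hpow : (2⁻¹ : ℝ≥0∞) ^ n ≤ ((n : ℝ≥0∞))⁻¹ := by
    rw [← ENNReal.inv_pow]
    apply ENNReal.inv_le_inv.2
    calc ((n : ℝ≥0∞)) ≤ ((2^n : ℕ) : ℝ≥0∞) := by
          exact_mod_cast Nat.cast_le.2 (Nat.lt_two_pow_self (n := n)).le
      _ = (2:ℝ≥0∞)^n := by push_cast; ring
  calc OuterMeasure.mkMetric'.pre (mfun (hflow A s)) ((n : ℝ≥0∞))⁻¹ (cyl σ)
      ≤ ∑' v : Fin n → Bool,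
          OuterMeasure.mkMetric'.pre (mfun (hflow A s)) ((n : ℝ≥0∞))⁻¹ (cyl (σ ++ List.ofFn v)) := by
        conv_lhs => rw [cyl_eq_iUnion_level σ n]
        exact measure_iUnion_le _
    _ ≤ ∑' v : Fin n → Bool, hflow A s (σ ++ List.ofFn v) := by
        refine ENNReal.tsum_le_tsum fun v => ?_
        refine le_trans (OuterMeasure.mkMetric'.pre_le ?_) (mfun_le (le_refl _))
        refine le_trans (diam_cyl_le _) (le_trans ?_ hpow)
        apply pow_le_pow_of_le_one (zero_le) (by norm_num)
        simp
    _ = hflow A s σ := by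
        rw [tsum_fintype]
        exact hflow_level hs.le n σ

lemma le_outer_cyl {A : Set (ℕ → Bool)} {s : ℝ} (hs : 0 < s) (σ : List Bool) :
    hflow A s σ ≤ OuterMeasure.mkMetric' (mfun (hflow A s)) (cyl σ) := by
  have hpre : (OuterMeasure.mkMetric'.pre (mfun (hflow A s)) 1) (cyl σ)
      ≤ OuterMeasure.mkMetric' (mfun (hflow A s)) (cyl σ) := by
    rw [OuterMeasure.mkMetric', OuterMeasure.iSup_apply]
    refine le_iSup_of_le 1 ?_
    rw [OuterMeasure.iSup_apply]
    exact le_iSup_of_le zero_lt_one le_rfl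
  refine le_trans ?_ hpre
  rw [OuterMeasure.mkMetric'.pre, OuterMeasure.boundedBy_apply]
  refine le_iInf fun t => le_iInf fun hcov => ?_
  set term : ℕ → ℝ≥0∞ := fun n => ⨆ _ : (t n).Nonempty,
    extend (fun s' (_ : EMetric.diam s' ≤ 1) => mfun (hflow A s) s') (t n) with hterm
  have hm_le_term : ∀ n, mfun (hflow A s) (t n) ≤ term n := by
    intro n
    by_cases hne : (t n).Nonempty
    · rw [hterm]
      simp only [iSup_pos hne]
      rw [extend, iInf_pos (diam_le_one (t n))]
    · rw [Set.not_nonempty_iff_eq_empty] at hne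
      rw [hne, mfun_empty hs (hflow_le_ew hs.le)]
      exact zero_le
  by_cases hS : ∑' n, term n = ∞
  · exact le_top.trans hS.symm.le
  refine ENNReal.le_of_forall_pos_le_add fun ε hε _ => ?_
  have hδ : ∀ n : ℕ, (0:ℝ≥0∞) < (ε : ℝ≥0∞) * (2⁻¹) ^ (n + 1) :=
    fun n => ENNReal.mul_pos (ENNReal.coe_pos.2 hε).ne' (pow_ne_zero _ (by norm_num))
  have hh_nil : hflow A s [] ≠ ∞ := hflow_ne_top hs.le []
  choose τ hτ1 hτ2 using fun n => mfun_exists hh_nil (t n) (hδ n)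
  have hcov2 : cyl σ ⊆ ⋃ n, cyl (τ n) :=
    le_trans hcov (Set.iUnion_mono fun n => hτ1 n)
  obtain ⟨F, hF⟩ := (isCompact_cyl σ).elim_finite_subcover
    (fun n => cyl (τ n)) (fun n => isOpen_cyl _) hcov2
  have hlen : ∀ n ∈ F, (cyl (τ n) ∩ cyl σ).Nonempty →
      (τ n).length ≤ σ.length + F.sup (fun n => (τ n).length) :=
    fun n hn _ => le_trans (Finset.le_sup (f := fun n => (τ n).length) hn) (Nat.le_add_left _ _)
  calc hflow A s σ ≤ ∑ n ∈ F, hflow A s (τ n) := fc hs.le _ σ F τ hlen hF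
    _ ≤ ∑ n ∈ F, (term n + (ε : ℝ≥0∞) * (2⁻¹) ^ (n + 1)) :=
        Finset.sum_le_sum fun n _ => le_trans (hτ2 n) (add_le_add (hm_le_term n) le_rfl)
    _ ≤ ∑' n, (term n + (ε : ℝ≥0∞) * (2⁻¹) ^ (n + 1)) := ENNReal.sum_le_tsum F
    _ = (∑' n, term n) + ∑' n, (ε : ℝ≥0∞) * (2⁻¹) ^ (n + 1) := ENNReal.tsum_add
    _ = (∑' n, term n) + ε := by rw [ENNReal.tsum_mul_left, tsum_half_pow, mul_one]

lemma nuMeas_cyl {A : Set (ℕ → Bool)} {s : ℝ} (hs : 0 < s) (σ : List Bool) :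
    nuMeas A s (cyl σ) = hflow A s σ := by
  rw [nuMeas, Measure.mkMetric', toMeasure_apply _ _ (measurableSet_cyl σ)]
  exact le_antisymm (outer_cyl_le hs σ) (le_outer_cyl hs σ)

lemma nuMeas_compl {A : Set (ℕ → Bool)} {s : ℝ} (hs : 0 < s) (hA : IsClosed A) :
    nuMeas A s Aᶜ = 0 := by
  have hcov : Aᶜ ⊆ ⋃ σ ∈ {σ : List Bool | ¬ hits A σ}, cyl σ := by
    intro x hx
    have hopen : IsOpen Aᶜ := hA.isOpen_compl
    obtain ⟨ε, hε, hball⟩ := Metric.isOpen_iff.1 hopen x hx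
    obtain ⟨n, hn⟩ := exists_pow_lt_of_lt_one hε (by norm_num : (1/2:ℝ) < 1)
    set σx := List.ofFn (fun i : Fin n => x i) with hσx
    have hsub : cyl σx ⊆ Aᶜ := by
      intro y hy
      apply hball
      rw [Metric.mem_ball, dist_comm]
      calc dist x y ≤ (1/2:ℝ) ^ σx.length := dist_le_of_mem_cyl (self_mem_cyl_ofFn x n) hy
        _ = (1/2:ℝ) ^ n := by rw [hσx, List.length_ofFn]
        _ < ε := hn
    have hnot : ¬ hits A σx := by
      rintro ⟨y, hyA, hyc⟩
      exact (hsub hyc) hyA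
    exact Set.mem_biUnion hnot (self_mem_cyl_ofFn x n)
  refine measure_mono_null hcov ?_
  refine (measure_biUnion_null_iff (Set.to_countable _)).2 fun σ hσ => ?_
  rw [nuMeas_cyl hs σ, hflow_of_not_hits hs.le hσ]

lemma frostman {A : Set (ℕ → Bool)} (hA : IsCompact A) {s : ℝ} (hs : 0 < s)
    (hdim : ENNReal.ofReal s < dimH A) :
    ∃ (c : ℝ) (μ : Measure (ℕ → Bool)), 0 < c ∧ IsMassDistributionOn μ A ∧
      ∀ σ : List Bool, μ (cyl σ) ≤ ENNReal.ofReal c * ew s σ := by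
  set g := gflow A s [] with hg
  have hg0 : g ≠ 0 := (gflow_nil_pos hs hdim).ne'
  have hgtop : g ≠ ∞ := gflow_ne_top hs.le []
  set μ := (g⁻¹ • nuMeas A s) with hμ
  have hcyl : ∀ σ, μ (cyl σ) = g⁻¹ * hflow A s σ := by
    intro σ
    rw [hμ, Measure.smul_apply, smul_eq_mul, nuMeas_cyl hs σ]
  have huniv : μ Set.univ = 1 := by
    rw [← cyl_nil, hcyl, hflow_nil, ← hg, ENNReal.inv_mul_cancel hg0 hgtop]
  refine ⟨(g⁻¹).toReal, μ, ?_, ⟨⟨huniv⟩, ?_⟩, ?_⟩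
  · apply ENNReal.toReal_pos
    · exact ENNReal.inv_ne_zero.2 hgtop
    · exact ENNReal.inv_ne_top.2 hg0
  · rw [hμ, Measure.smul_apply, smul_eq_mul, nuMeas_compl hs hA.isClosed, mul_zero]
  · intro σ
    rw [hcyl, ENNReal.ofReal_toReal (ENNReal.inv_ne_top.2 hg0)]
    exact mul_le_mul' le_rfl (hflow_le_ew hs.le σ)


/-! ### the mass distribution principle -/

lemma ew_eq_q_pow (s : ℝ) (σ : List Bool) :
    ew s σ = ((2:ℝ≥0∞) ^ (-s)) ^ σ.length := by
  rw [ew, ENNReal.rpow_mul, ENNReal.rpow_natCast]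

lemma mass_le_dimH {A : Set (ℕ → Bool)} {s c : ℝ} (hs : 0 < s) (hc : 0 < c)
    {μ : Measure (ℕ → Bool)} (hprob : IsProbabilityMeasure μ) (hnull : μ Aᶜ = 0)
    (hb : ∀ σ : List Bool, μ (cyl σ) ≤ ENNReal.ofReal c * ew s σ) :
    ENNReal.ofReal s ≤ dimH A := by
  set C := ENNReal.ofReal c * (2:ℝ≥0∞) ^ s with hC
  have hC0 : C ≠ 0 :=
    mul_ne_zero (ENNReal.ofReal_pos.2 hc).ne' (ENNReal.rpow_pos (by norm_num) (by norm_num)).ne'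
  have hCtop : C ≠ ∞ :=
    ENNReal.mul_ne_top ENNReal.ofReal_ne_top
      (ENNReal.rpow_ne_top_of_nonneg hs.le (by norm_num))
  have hq : (2:ℝ≥0∞) ^ (-s) < 1 :=
    ENNReal.rpow_lt_one_of_one_lt_of_neg (by norm_num) (by linarith)
  have key : ∀ E : Set (ℕ → Bool), EMetric.diam E ≤ 2⁻¹ → μ E ≤ C * EMetric.diam E ^ s := by
    intro E hE
    rcases E.eq_empty_or_nonempty with rfl | ⟨x, hx⟩
    · rw [measure_empty]; exact zero_le
    by_cases hdE : EMetric.diam E = 0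
    · have hsub : ∀ n : ℕ, E ⊆ cyl (List.ofFn fun i : Fin n => x i) :=
        fun n => subset_cyl_of_diam_le hx (by rw [hdE]; exact zero_le)
      have hμ0 : μ E = 0 := by
        apply _root_.le_antisymm _ (zero_le)
        refine ENNReal.le_of_forall_pos_le_add fun ε hε _ => ?_
        rw [zero_add]
        have ht : Filter.Tendsto (fun n : ℕ => ENNReal.ofReal c * ((2:ℝ≥0∞)^(-s))^n)
            Filter.atTop (nhds 0) := by
          have := ENNReal.Tendsto.const_mul (a := ENNReal.ofReal c)
            (ENNReal.tendsto_pow_atTop_nhds_zero_of_lt_one hq)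
            (Or.inr ENNReal.ofReal_ne_top)
          simpa using this
        rw [ENNReal.tendsto_atTop_zero] at ht
        obtain ⟨N, hN⟩ := ht ε (ENNReal.coe_pos.2 hε)
        calc μ E ≤ μ (cyl (List.ofFn fun i : Fin N => x i)) := measure_mono (hsub N)
          _ ≤ ENNReal.ofReal c * ew s (List.ofFn fun i : Fin N => x i) := hb _
          _ = ENNReal.ofReal c * ((2:ℝ≥0∞)^(-s))^N := by
              rw [ew_eq_q_pow, List.length_ofFn]
          _ ≤ ε := hN N le_rfl
      rw [hμ0]; exact zero_le
    · have hdtop : EMetric.diam E ≠ ∞ := fun h => by simp [h] at hE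
      have hhalf : EMetric.diam E / 2 < EMetric.diam E := ENNReal.half_lt_self hdE hdtop
      have hex : ∃ k : ℕ, ¬ (EMetric.diam E ≤ (2⁻¹:ℝ≥0∞)^(k+1)) := by
        have h2 := ENNReal.tendsto_pow_atTop_nhds_zero_of_lt_one
          (show (2⁻¹:ℝ≥0∞) < 1 by norm_num)
        rw [ENNReal.tendsto_atTop_zero] at h2
        obtain ⟨N, hN⟩ := h2 (EMetric.diam E / 2) (ENNReal.div_pos hdE (by norm_num))
        refine ⟨N, fun hcon => ?_⟩
        have hhh : EMetric.diam E ≤ EMetric.diam E / 2 :=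
          le_trans hcon (hN (N+1) (Nat.le_succ N))
        exact absurd (lt_of_le_of_lt hhh hhalf) (lt_irrefl _)
      set k := Nat.find hex with hk
      have hk1 : ¬ (EMetric.diam E ≤ (2⁻¹:ℝ≥0∞)^(k+1)) := Nat.find_spec hex
      have hk2 : EMetric.diam E ≤ (2⁻¹:ℝ≥0∞)^k := by
        rcases Nat.eq_zero_or_pos k with h0 | hpos
        · rw [h0, pow_zero]
          exact le_trans hE (by norm_num)
        · have := Nat.find_min hex (m := k - 1) (by omega)
          push_neg at this
          have hkk : k - 1 + 1 = k := by omega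
          rwa [hkk] at this
      have hsub := subset_cyl_of_diam_le hx hk2
      calc μ E ≤ ENNReal.ofReal c * ew s (List.ofFn fun i : Fin k => x i) :=
            le_trans (measure_mono hsub) (hb _)
        _ = ENNReal.ofReal c * ((2:ℝ≥0∞) ^ (-s * (k:ℝ))) := by
            rw [ew, List.length_ofFn]
        _ = C * ((2:ℝ≥0∞) ^ (-s * ((k:ℝ)+1))) := by
            rw [hC, mul_assoc]
            congr 1
            rw [← ENNReal.rpow_add _ _ (by norm_num) (by norm_num)]
            congr 1
            ring
        _ = C * (((2⁻¹:ℝ≥0∞))^(k+1))^s := by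
            rw [ew_pow_diam s (k+1)]
            congr 2
            push_cast
            ring
        _ ≤ C * EMetric.diam E ^ s :=
            mul_le_mul' le_rfl (ENNReal.rpow_le_rpow (not_le.1 hk1).le hs.le)
  set ν := C⁻¹ • μ with hν
  have hνH : ν ≤ μH[s] := by
    apply Measure.le_hausdorffMeasure s ν 2⁻¹ (by norm_num)
    intro E hdE
    rw [hν, Measure.smul_apply, smul_eq_mul]
    calc C⁻¹ * μ E ≤ C⁻¹ * (C * EMetric.diam E ^ s) := mul_le_mul' le_rfl (key E hdE)
      _ = (C⁻¹ * C) * EMetric.diam E ^ s := (mul_assoc _ _ _).symm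
      _ = EMetric.diam E ^ s := by rw [ENNReal.inv_mul_cancel hC0 hCtop, one_mul]
  have hμA : μ A = 1 := by
    apply _root_.le_antisymm
    · rw [← hprob.measure_univ]
      exact measure_mono (Set.subset_univ A)
    · calc (1:ℝ≥0∞) = μ Set.univ := hprob.measure_univ.symm
        _ = μ (A ∪ Aᶜ) := by rw [Set.union_compl_self]
        _ ≤ μ A + μ Aᶜ := measure_union_le _ _
        _ = μ A := by rw [hnull, add_zero]
  have hH : μH[s] A ≠ 0 := by
    have h1 : ν A ≤ μH[s] A := Measure.le_iff'.1 hνH A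
    have h2 : ν A = C⁻¹ := by
      rw [hν, Measure.smul_apply, smul_eq_mul, hμA, mul_one]
    intro h0
    rw [h0] at h1
    rw [h2] at h1
    exact (ENNReal.inv_ne_zero.2 hCtop) (le_antisymm h1 (zero_le))
  have hcoe : ((s.toNNReal : ℝ)) = s := Real.coe_toNNReal s hs.le
  have hfin := le_dimH_of_hausdorffMeasure_ne_zero (s := A) (d := s.toNNReal)
    (by rw [hcoe]; exact hH)
  rwa [show ((s.toNNReal : ℝ≥0∞)) = ENNReal.ofReal s from rfl] at hfin

end Stmt16Aux

theorem stmt16 (A : Set (ℕ → Bool)) (hA : IsCompact A) :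
    dimH A = sSup ((fun s : ℝ => ENNReal.ofReal s) ''
      {s : ℝ | 0 < s ∧ ∃ (c : ℝ) (μ : Measure (ℕ → Bool)), 0 < c ∧
        IsMassDistributionOn μ A ∧
        ∀ σ : List Bool,
          μ (cyl σ) ≤ ENNReal.ofReal c * (2 : ℝ≥0∞) ^ (-s * (σ.length : ℝ))}) := by
  apply le_antisymm
  · by_contra hlt
    push_neg at hlt
    obtain ⟨r, hr0, hr1, hr2⟩ := ENNReal.lt_iff_exists_real_btwn.1 hlt
    have hrpos : 0 < r := by
      rcases lt_or_eq_of_le hr0 with h | h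
      · exact h
      · exfalso
        rw [← h, ENNReal.ofReal_zero] at hr1
        exact (not_lt_of_ge (zero_le)) hr1
    obtain ⟨c, μ, hc, hmass, hb⟩ := Stmt16Aux.frostman hA hrpos hr2
    have hmem : ENNReal.ofReal r ∈ ((fun s : ℝ => ENNReal.ofReal s) ''
        {s : ℝ | 0 < s ∧ ∃ (c : ℝ) (μ : Measure (ℕ → Bool)), 0 < c ∧
          IsMassDistributionOn μ A ∧
          ∀ σ : List Bool,
            μ (cyl σ) ≤ ENNReal.ofReal c * (2 : ℝ≥0∞) ^ (-s * (σ.length : ℝ))}) :=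
      ⟨r, ⟨hrpos, c, μ, hc, hmass, hb⟩, rfl⟩
    exact absurd (le_sSup hmem) (not_le.2 hr1)
  · apply sSup_le
    rintro x ⟨r, ⟨hr0, c, μ, hc, ⟨hprob, hnull⟩, hb⟩, rfl⟩
    exact Stmt16Aux.mass_le_dimH hr0 hc hprob hnull hb
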